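/- Let p > 3 be a prime. Then ∑_{k=0}^{p-1} (1/k)·C(2k,k) ≡ 0 (mod p) and hence ∑_{j=1}^{(p-1)/2} (1/j)·C(2j,j) ≡ 0 (mod p), where the sums start at k=1 (resp. j=1) and 1/k denotes the inverse of k modulo p. -/

import Mathlib

open Finset

lemma sum_choose_pad (N M : ℕ) (c : ℕ → ℕ) (d : ℤ) (hc : ∀ i, N ≤ i → c i = 0)
    (hNM : N ≤ M) :
    ∑ i ∈ range M, (c i : ℤ) * d^i = ∑ i ∈ range N, (c i : ℤ) * d^i := by
  rw [eq_comm]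
  apply Finset.sum_subset (by gcongr)
  intro x _ hx
  simp only [mem_range, not_lt] at hx
  rw [hc x hx]
  simp

lemma zs_pow (d : ℤ) (n : ℕ) :
    ((1 + Zsqrtd.sqrtd : ℤ√d)^n).re = ∑ i ∈ range (n+1), (n.choose (2*i) : ℤ) * d^i ∧
    ((1 + Zsqrtd.sqrtd : ℤ√d)^n).im = ∑ i ∈ range (n+1), (n.choose (2*i+1) : ℤ) * d^i := by
  induction n with
  | zero => simp
  | succ n ih =>
    obtain ⟨h1, h2⟩ := ih
    have hpadE : ∑ i ∈ range (n+2), (n.choose (2*i) : ℤ) * d^i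
        = ∑ i ∈ range (n+1), (n.choose (2*i) : ℤ) * d^i :=
      sum_choose_pad (n+1) (n+2) _ d (fun i hi => Nat.choose_eq_zero_of_lt (by omega)) (by omega)
    have hpadO : ∑ i ∈ range (n+2), (n.choose (2*i+1) : ℤ) * d^i
        = ∑ i ∈ range (n+1), (n.choose (2*i+1) : ℤ) * d^i :=
      sum_choose_pad (n+1) (n+2) _ d (fun i hi => Nat.choose_eq_zero_of_lt (by omega)) (by omega)
    constructor
    · have hre : ((1 + Zsqrtd.sqrtd : ℤ√d)^(n+1)).re
          = ((1 + Zsqrtd.sqrtd : ℤ√d)^n).re + d * ((1 + Zsqrtd.sqrtd : ℤ√d)^n).im := by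
        rw [pow_succ]; simp [Zsqrtd.re_mul]
      rw [hre, h1, h2]
      rw [Finset.sum_range_succ' (fun i => ((n+1).choose (2*i) : ℤ) * d^i) (n+1)]
      have : ∀ i, (((n+1).choose (2*(i+1)) : ℤ)) * d^(i+1)
          = (n.choose (2*i+1) : ℤ) * d^i * d + (n.choose (2*(i+1)) : ℤ) * d^(i+1) := by
        intro i
        have h : (((n+1).choose (2*(i+1)) : ℤ)) = n.choose (2*i+1) + n.choose (2*(i+1)) := by
          rw [show 2*(i+1) = (2*i+1)+1 from by ring]
          push_cast [Nat.choose_succ_succ]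
          ring
        rw [h]
        ring
      rw [Finset.sum_congr rfl (fun i _ => this i)]
      rw [Finset.sum_add_distrib]
      have hshift : ∑ i ∈ range (n+1), (n.choose (2*(i+1)) : ℤ) * d^(i+1) + ((n.choose 0 : ℤ)) * d^0
          = ∑ i ∈ range (n+2), (n.choose (2*i) : ℤ) * d^i := by
        rw [Finset.sum_range_succ' (fun i => ((n.choose (2*i)) : ℤ) * d^i) (n+1)]
      rw [hpadE] at hshift
      simp only [Nat.mul_zero, mul_zero, Nat.choose_zero_right, Nat.cast_one, pow_zero,
        mul_one] at hshift ⊢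
      rw [← Finset.sum_mul]
      linear_combination -hshift
    · have him : ((1 + Zsqrtd.sqrtd : ℤ√d)^(n+1)).im
          = ((1 + Zsqrtd.sqrtd : ℤ√d)^n).re + ((1 + Zsqrtd.sqrtd : ℤ√d)^n).im := by
        rw [pow_succ]; simp [Zsqrtd.im_mul]
      rw [him, h1, h2, ← hpadE, ← hpadO, ← Finset.sum_add_distrib]
      apply Finset.sum_congr rfl
      intro i _
      have : (n+1).choose (2*i+1) = n.choose (2*i) + n.choose (2*i+1) := Nat.choose_succ_succ n (2*i)
      rw [this]
      push_cast
      ring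


lemma scalar_mul_re (d c : ℤ) (z : ℤ√d) : (((c : ℤ√d)) * z).re = c * z.re := by
  simp [Zsqrtd.re_mul]

-- (1+√-3)^3 = -8
lemma cube3 : ((1 + Zsqrtd.sqrtd : ℤ√(-3)))^3 = -8 := by
  ext <;> simp [pow_succ, Zsqrtd.re_mul, Zsqrtd.im_mul]

-- the even binomial sum with weight (-3)^i
lemma sumA (p : ℕ) (hp1 : p % 6 = 1 ∨ p % 6 = 5) :
    ∑ i ∈ Finset.range (p+1), (p.choose (2*i) : ℤ) * (-3)^i = 2^(p-1) := by
  rw [← (zs_pow (-3) p).1]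
  obtain ⟨k, r, hr, hpk⟩ : ∃ k r, (r = 1 ∨ r = 5) ∧ p = 6*k + r := by
    rcases hp1 with h | h
    · exact ⟨p / 6, 1, Or.inl rfl, by omega⟩
    · exact ⟨p / 6, 5, Or.inr rfl, by omega⟩
  have h6 : ((1 + Zsqrtd.sqrtd : ℤ√(-3)))^6 = 64 := by
    rw [show (6:ℕ) = 3*2 by norm_num, pow_mul, cube3]; norm_num
  have key : ((1 + Zsqrtd.sqrtd : ℤ√(-3)))^p = 64^k * (1 + Zsqrtd.sqrtd)^r := by
    rw [hpk, pow_add, pow_mul, h6]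
  have h64 : ((64:ℤ√(-3)))^k = ((2^(6*k) : ℤ) : ℤ√(-3)) := by
    push_cast
    rw [show ((2:ℤ√(-3)))^(6*k) = (2^6)^k by rw [pow_mul]]
    norm_num
  rcases hr with h | h <;> subst h
  · rw [key, pow_one, h64, scalar_mul_re]
    have : ((1:ℤ√(-3)) + Zsqrtd.sqrtd).re = 1 := by simp
    rw [this, show p - 1 = 6*k from by omega]
    ring
  · have h5 : ((1 + Zsqrtd.sqrtd : ℤ√(-3)))^5 = ⟨16, -16⟩ := by
      ext <;> simp [pow_succ, Zsqrtd.re_mul, Zsqrtd.im_mul] <;> ring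
    rw [key, h5, h64, scalar_mul_re]
    have : (⟨16, -16⟩ : ℤ√(-3)).re = 16 := rfl
    rw [this, show p - 1 = 6*k+4 from by omega, pow_add]
    norm_num

-- the even binomial sum, weight 1
lemma sumB (p : ℕ) (hp : 1 ≤ p) :
    ∑ i ∈ Finset.range (p+1), (p.choose (2*i) : ℤ) = 2^(p-1) := by
  have h := (zs_pow 1 p).1
  simp only [one_pow, mul_one] at h
  rw [← h]
  have key : ∀ n : ℕ, 1 ≤ n → ((1 + Zsqrtd.sqrtd : ℤ√1))^n = ((2^(n-1) : ℤ) : ℤ√1) * (1 + Zsqrtd.sqrtd) := by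
    intro n hn
    induction n with
    | zero => omega
    | succ n ih =>
      rcases Nat.eq_or_lt_of_le hn with h1 | h1
      · simp [← h1]
      · have hn1 : 1 ≤ n := by omega
        rw [pow_succ, ih (by omega)]
        have h22 : ((1 + Zsqrtd.sqrtd : ℤ√1)) * (1 + Zsqrtd.sqrtd) = ((2:ℤ):ℤ√1) * (1 + Zsqrtd.sqrtd) := by
          ext <;> simp [Zsqrtd.re_mul, Zsqrtd.im_mul]
        rw [mul_assoc, h22, ← mul_assoc, ← Int.cast_mul]
        congr 2
        rw [show n + 1 - 1 = (n-1) + 1 from by omega, pow_succ]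
  rw [key p hp, scalar_mul_re]
  have : ((1:ℤ√1) + Zsqrtd.sqrtd).re = 1 := by simp
  rw [this]
  ring

lemma choose_p1 (p : ℕ) (hp : p.Prime) : ∀ j, j ≤ p - 1 → (((p-1).choose j : ℕ) : ZMod p) = (-1)^j := by
  intro j
  induction j with
  | zero => simp
  | succ j ih =>
    intro hj
    have hj' : j ≤ p - 1 := by omega
    have hpas : (p-1).choose j + (p-1).choose (j+1) = p.choose (j+1) := by
      have hps : p - 1 + 1 = p := by have := hp.two_le; omega
      simpa only [Nat.succ_eq_add_one, hps] using (Nat.choose_succ_succ (p-1) j).symm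
    have hdvd : p ∣ p.choose (j+1) := hp.dvd_choose_self (by omega) (by have := hp.two_le; omega)
    have hcast : ((p.choose (j+1) : ℕ) : ZMod p) = 0 :=
      (ZMod.natCast_eq_zero_iff _ _).mpr hdvd
    have h2 : (((p-1).choose j : ℕ) : ZMod p) + ((p-1).choose (j+1) : ℕ) = 0 := by
      rw [← Nat.cast_add, hpas, hcast]
    rw [ih hj'] at h2
    have : (((p-1).choose (j+1) : ℕ) : ZMod p) = -(-1)^j := eq_neg_of_add_eq_zero_right h2
    rw [this, pow_succ]
    ring

lemma stepD (p : ℕ) (hp : p.Prime) (i : ℕ) (h1 : 1 ≤ i) (h2 : 2*i ≤ p - 1) :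
    ((p.choose (2*i) / p : ℕ) : ZMod p) = -(((2*i : ℕ) : ZMod p))⁻¹ := by
  haveI : Fact p.Prime := ⟨hp⟩
  have hp2 := hp.two_le
  have hdvd : p ∣ p.choose (2*i) := hp.dvd_choose_self (by omega) (by omega)
  have hc : p * (p.choose (2*i) / p) = p.choose (2*i) := Nat.mul_div_cancel' hdvd
  have key : 2*i * (p.choose (2*i) / p) = (p-1).choose (2*i - 1) := by
    have h := Nat.add_one_mul_choose_eq (p-1) (2*i-1)
    have hps : p - 1 + 1 = p := by omega
    have hss : 2*i - 1 + 1 = 2*i := by omega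
    rw [hps, hss] at h
    -- h : p * (p-1).choose (2*i-1) = p.choose (2*i) * (2*i)
    have : p * (2*i * (p.choose (2*i) / p)) = p * ((p-1).choose (2*i-1)) := by
      calc p * (2*i * (p.choose (2*i) / p)) = 2*i * (p * (p.choose (2*i) / p)) := by ring
      _ = 2*i * p.choose (2*i) := by rw [hc]
      _ = p * ((p-1).choose (2*i-1)) := by rw [h]; ring
    exact Nat.eq_of_mul_eq_mul_left (by omega) this
  have hcast : ((2*i : ℕ) : ZMod p) * ((p.choose (2*i) / p : ℕ) : ZMod p) = -1 := by
    rw [← Nat.cast_mul, key, choose_p1 p hp _ (by omega)]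
    exact Odd.neg_one_pow ⟨i-1, by omega⟩
  have h2i : ((2*i : ℕ) : ZMod p) ≠ 0 := by
    rw [Ne, ZMod.natCast_eq_zero_iff]
    intro hd
    exact absurd (Nat.le_of_dvd (by omega) hd) (by omega)
  apply mul_left_cancel₀ h2i
  rw [hcast, mul_neg, mul_inv_cancel₀ h2i]

lemma stepB (p : ℕ) (hp : p.Prime) (hp3 : 3 < p) :
    ∀ k, k ≤ (p-1)/2 → (((2*k).choose k : ℕ) : ZMod p) = (-4)^k * (((p-1)/2).choose k : ℕ) := by
  haveI : Fact p.Prime := ⟨hp⟩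
  set m := (p-1)/2 with hmdef
  have hodd : p % 2 = 1 := by rcases hp.eq_two_or_odd with h | h; omega; exact h
  have hm : p = 2*m+1 := by omega
  have hMcast : (2 : ZMod p) * (m : ℕ) = -1 := by
    have : ((2*m : ℕ) : ZMod p) = ((p : ℕ) : ZMod p) - 1 := by
      rw [show 2*m = p - 1 from by omega, Nat.cast_sub (by omega)]
      norm_num
    rw [ZMod.natCast_self] at this
    push_cast at this
    rw [this]
    ring
  intro k
  induction k with
  | zero => simp
  | succ k ih =>
    intro hk1
    have hkm : k ≤ m := by omega
    have ihk := ih (by omega)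
    -- Nat identities
    have hA : (2*k+1) * ((2*k).choose k) = (2*k+1).choose (k+1) * (k+1) := by
      have := Nat.add_one_mul_choose_eq (2*k) k
      simpa only [Nat.succ_eq_add_one] using this
    have hsymm : (2*k+1).choose k = (2*k+1).choose (k+1) := by
      have := Nat.choose_symm (show k+1 ≤ 2*k+1 by omega)
      rw [show 2*k+1-(k+1) = k from by omega] at this
      exact this
    have hB : (2*(k+1)).choose (k+1) = 2 * ((2*k+1).choose (k+1)) := by
      have h := Nat.choose_succ_succ (2*k+1) k
      simp only [Nat.succ_eq_add_one] at h
      rw [show 2*(k+1) = 2*k+1+1 from by ring, h, hsymm]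
      ring
    have f1 : (k+1) * ((2*(k+1)).choose (k+1)) = 2*(2*k+1) * ((2*k).choose k) := by
      rw [hB]
      calc (k+1) * (2 * ((2*k+1).choose (k+1))) = 2 * ((2*k+1).choose (k+1) * (k+1)) := by ring
      _ = 2 * ((2*k+1) * ((2*k).choose k)) := by rw [hA]
      _ = 2*(2*k+1) * ((2*k).choose k) := by ring
    have f2 : m.choose (k+1) * (k+1) = m.choose k * (m - k) := Nat.choose_succ_right_eq m k
    -- casts
    have e1 : ((k:ZMod p)+1) * (((2*(k+1)).choose (k+1) : ℕ) : ZMod p)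
        = (2*(2*(k:ZMod p)+1)) * (((2*k).choose k : ℕ) : ZMod p) := by
      have := congrArg (Nat.cast : ℕ → ZMod p) f1
      push_cast at this
      linear_combination this
    have e2 : ((m.choose (k+1) : ℕ) : ZMod p) * ((k:ZMod p)+1)
        = ((m.choose k : ℕ) : ZMod p) * ((m : ZMod p) - k) := by
      have := congrArg (Nat.cast : ℕ → ZMod p) f2
      push_cast [Nat.cast_sub hkm] at this
      linear_combination this
    have hk1ne : ((k:ZMod p)+1) ≠ 0 := by
      have : (((k+1 : ℕ)) : ZMod p) ≠ 0 := by
        rw [Ne, ZMod.natCast_eq_zero_iff]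
        intro hd
        exact absurd (Nat.le_of_dvd (by omega) hd) (by omega)
      push_cast at this
      exact this
    apply mul_left_cancel₀ hk1ne
    rw [e1, ihk]
    linear_combination 4*(-4)^k * e2 + 2*(-4)^k * ((m.choose k : ℕ) : ZMod p) * hMcast

lemma cast_ne_zero_of (p j : ℕ) (hp : p.Prime) (h1 : j ≠ 0) (h2 : j < p) : ((j : ℕ) : ZMod p) ≠ 0 := by
  haveI : Fact p.Prime := ⟨hp⟩
  rw [Ne, ZMod.natCast_eq_zero_iff]
  intro hd
  exact absurd (Nat.le_of_dvd (by omega) hd) (by omega)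

lemma binom_sum_Icc (p : ℕ) (n : ℕ) (x : ZMod p) :
    ∑ k ∈ Finset.Icc 1 n, ((n.choose k : ℕ) : ZMod p) * x^k = (1+x)^n - 1 := by
  have h := add_pow x 1 n
  simp only [one_pow, mul_one] at h
  rw [add_comm x 1] at h
  rw [Finset.sum_range_succ' (fun k => x^k * ((n.choose k : ℕ) : ZMod p)) n] at h
  simp only [pow_zero, one_mul, Nat.choose_zero_right, Nat.cast_one] at h
  rw [← Finset.Ico_add_one_right_eq_Icc, Finset.sum_Ico_eq_sum_range]
  simp only [show n + 1 - 1 = n from rfl]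
  rw [h]
  have : ∀ i ∈ Finset.range n, ((n.choose (1+i) : ℕ) : ZMod p) * x^(1+i)
      = x^(i+1) * ((n.choose (i+1) : ℕ) : ZMod p) := by
    intro i _
    rw [show 1 + i = i + 1 from by ring]
    ring
  rw [Finset.sum_congr rfl this]
  ring

lemma idC (p : ℕ) (hp : p.Prime) (x : ZMod p) :
    ∀ n, n < p → ∑ k ∈ Finset.Icc 1 n, (k : ZMod p)⁻¹ * ((n.choose k : ℕ) : ZMod p) * x^k
      = ∑ j ∈ Finset.Icc 1 n, (j : ZMod p)⁻¹ * ((1+x)^j - 1) := by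
  haveI : Fact p.Prime := ⟨hp⟩
  intro n
  induction n with
  | zero => simp
  | succ n ih =>
    intro hn
    have split : ∀ k ∈ Finset.Icc 1 (n+1),
        (k : ZMod p)⁻¹ * (((n+1).choose k : ℕ) : ZMod p) * x^k
        = (k : ZMod p)⁻¹ * ((n.choose k : ℕ) : ZMod p) * x^k
          + ((n+1 : ℕ) : ZMod p)⁻¹ * (((n+1).choose k : ℕ) : ZMod p) * x^k := by
      intro k hk
      simp only [Finset.mem_Icc] at hk
      obtain ⟨j, rfl⟩ : ∃ j, k = j+1 := ⟨k-1, by omega⟩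
      have hkne : (((j+1 : ℕ)) : ZMod p) ≠ 0 := cast_ne_zero_of p (j+1) hp (by omega) (by omega)
      have hnne : (((n+1 : ℕ)) : ZMod p) ≠ 0 := cast_ne_zero_of p (n+1) hp (by omega) (by omega)
      have hcast : (((n+1:ℕ)) : ZMod p) * ((n.choose j : ℕ) : ZMod p)
          = (((n+1).choose (j+1) : ℕ) : ZMod p) * ((j+1 : ℕ) : ZMod p) := by
        have := congrArg (Nat.cast : ℕ → ZMod p) (Nat.add_one_mul_choose_eq n j)
        push_cast [Nat.succ_eq_add_one] at this
        push_cast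
        linear_combination this
      have hpas : (((n+1).choose (j+1) : ℕ) : ZMod p)
          = ((n.choose (j+1) : ℕ) : ZMod p) + ((n.choose j : ℕ) : ZMod p) := by
        have := congrArg (Nat.cast : ℕ → ZMod p) (Nat.choose_succ_succ n j)
        push_cast [Nat.succ_eq_add_one] at this
        linear_combination this
      push_cast at hkne hnne hcast hpas ⊢
      have h5 : ((j:ZMod p)+1)⁻¹ * ((n.choose j : ℕ) : ZMod p)
          = ((n:ZMod p)+1)⁻¹ * (((n+1).choose (j+1) : ℕ) : ZMod p) := by
        field_simp
        linear_combination hcast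
      linear_combination (x^(j+1) * ((j:ZMod p)+1)⁻¹) * hpas + x^(j+1) * h5
    rw [Finset.sum_congr rfl split, Finset.sum_add_distrib]
    have first : ∑ k ∈ Finset.Icc 1 (n+1), (k : ZMod p)⁻¹ * ((n.choose k : ℕ) : ZMod p) * x^k
        = ∑ k ∈ Finset.Icc 1 n, (k : ZMod p)⁻¹ * ((n.choose k : ℕ) : ZMod p) * x^k := by
      rw [Finset.sum_Icc_succ_top (by omega)]
      rw [Nat.choose_succ_self]
      push_cast
      ring
    have second : ∑ k ∈ Finset.Icc 1 (n+1), ((n+1 : ℕ) : ZMod p)⁻¹ * (((n+1).choose k : ℕ) : ZMod p) * x^k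
        = ((n+1 : ℕ) : ZMod p)⁻¹ * ((1+x)^(n+1) - 1) := by
      have hassoc : ∀ k ∈ Finset.Icc 1 (n+1), ((n+1 : ℕ) : ZMod p)⁻¹ * (((n+1).choose k : ℕ) : ZMod p) * x^k
          = ((n+1 : ℕ) : ZMod p)⁻¹ * ((((n+1).choose k : ℕ) : ZMod p) * x^k) := fun k _ => mul_assoc _ _ _
      rw [Finset.sum_congr rfl hassoc, ← Finset.mul_sum, binom_sum_Icc]
    rw [first, second, ih (by omega), Finset.sum_Icc_succ_top (show 1 ≤ n+1 by omega)]

lemma keyZero (p : ℕ) (hp : p.Prime) (hp3 : 3 < p) :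
    ∑ j ∈ Finset.Icc 1 ((p-1)/2), (j : ZMod p)⁻¹ * ((-3 : ZMod p)^j - 1) = 0 := by
  haveI : Fact p.Prime := ⟨hp⟩
  set m := (p-1)/2 with hmdef
  have hodd : p % 2 = 1 := by rcases hp.eq_two_or_odd with h | h; omega; exact h
  have hm : p = 2*m+1 := by omega
  have h3 : p % 3 ≠ 0 := by
    intro h
    have : (3:ℕ) ∣ p := by omega
    have := (Nat.prime_dvd_prime_iff_eq (by norm_num) hp).mp this
    omega
  have hp6 : p % 6 = 1 ∨ p % 6 = 5 := by omega
  -- integer identity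
  have hint : ∑ i ∈ Finset.Icc 1 m, (p.choose (2*i) : ℤ) * ((-3)^i - 1) = 0 := by
    have hfull : ∑ i ∈ Finset.range (p+1), (p.choose (2*i) : ℤ) * ((-3)^i - 1) = 0 := by
      have : ∀ i ∈ Finset.range (p+1), (p.choose (2*i) : ℤ) * ((-3)^i - 1)
          = (p.choose (2*i) : ℤ) * (-3)^i - (p.choose (2*i) : ℤ) := by
        intro i _; ring
      rw [Finset.sum_congr rfl this, Finset.sum_sub_distrib, sumA p hp6, sumB p (by omega)]
      ring
    rw [← hfull]
    apply Finset.sum_subset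
    · intro i hi
      simp only [Finset.mem_Icc, Finset.mem_range] at *
      omega
    · intro i hi hni
      simp only [Finset.mem_Icc, Finset.mem_range] at *
      rcases Nat.eq_zero_or_pos i with h0 | h0
      · subst h0; norm_num
      · have : m < i := by omega
        have : p.choose (2*i) = 0 := Nat.choose_eq_zero_of_lt (by omega)
        rw [this]
        norm_num
  have hdiv : ∑ i ∈ Finset.Icc 1 m, ((p.choose (2*i) / p : ℕ) : ℤ) * ((-3)^i - 1) = 0 := by
    have hmul : (p:ℤ) * ∑ i ∈ Finset.Icc 1 m, ((p.choose (2*i) / p : ℕ) : ℤ) * ((-3)^i - 1) = 0 := by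
      rw [Finset.mul_sum, ← hint]
      apply Finset.sum_congr rfl
      intro i hi
      simp only [Finset.mem_Icc] at hi
      have hdvd : p ∣ p.choose (2*i) := hp.dvd_choose_self (by omega) (by omega)
      have : (p:ℤ) * ((p.choose (2*i) / p : ℕ) : ℤ) = (p.choose (2*i) : ℤ) := by
        rw [← Nat.cast_mul, Nat.mul_div_cancel' hdvd]
      rw [← mul_assoc, this]
    rcases mul_eq_zero.mp hmul with h | h
    · exfalso; have := hp.two_le; simp at h; omega
    · exact h
  have hzc : ∑ i ∈ Finset.Icc 1 m, ((p.choose (2*i) / p : ℕ) : ZMod p) * ((-3 : ZMod p)^i - 1) = 0 := by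
    calc ∑ i ∈ Finset.Icc 1 m, ((p.choose (2*i) / p : ℕ) : ZMod p) * ((-3 : ZMod p)^i - 1)
        = ((∑ i ∈ Finset.Icc 1 m, ((p.choose (2*i) / p : ℕ) : ℤ) * ((-3)^i - 1) : ℤ) : ZMod p) := by
          rw [Int.cast_sum]
          apply Finset.sum_congr rfl
          intro i _
          generalize p.choose (2*i)/p = c
          push_cast
          ring
      _ = 0 := by rw [hdiv]; exact Int.cast_zero
  have h2ne : ((2:ℕ) : ZMod p) ≠ 0 := cast_ne_zero_of p 2 hp (by omega) (by omega)
  push_cast at h2ne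
  calc ∑ j ∈ Finset.Icc 1 m, (j : ZMod p)⁻¹ * ((-3 : ZMod p)^j - 1)
      = ∑ i ∈ Finset.Icc 1 m, (-2 : ZMod p) * (((p.choose (2*i) / p : ℕ) : ZMod p) * ((-3 : ZMod p)^i - 1)) := by
        apply Finset.sum_congr rfl
        intro i hi
        simp only [Finset.mem_Icc] at hi
        rw [stepD p hp i (by omega) (by omega)]
        push_cast
        have key : (-2 : ZMod p) * (-((2*(i:ZMod p))⁻¹) * ((-3 : ZMod p)^i - 1))
            = (2 * 2⁻¹) * ((i : ZMod p)⁻¹ * ((-3 : ZMod p)^i - 1)) := by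
          rw [mul_inv]
          ring
        rw [key, mul_inv_cancel₀ h2ne, one_mul]
    _ = (-2 : ZMod p) * ∑ i ∈ Finset.Icc 1 m, (((p.choose (2*i) / p : ℕ) : ZMod p) * ((-3 : ZMod p)^i - 1)) := by
        rw [Finset.mul_sum]
    _ = 0 := by rw [hzc, mul_zero]

theorem stmt18 (p : ℕ) (hp : p.Prime) (hp3 : 3 < p) :
    (∑ k ∈ Finset.Icc 1 (p - 1), (k : ZMod p)⁻¹ * Nat.choose (2 * k) k = 0) ∧
      (∑ j ∈ Finset.Icc 1 ((p - 1) / 2), (j : ZMod p)⁻¹ * Nat.choose (2 * j) j = 0) := by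
  haveI : Fact p.Prime := ⟨hp⟩
  set m := (p-1)/2 with hmdef
  have hodd : p % 2 = 1 := by rcases hp.eq_two_or_odd with h | h; omega; exact h
  have hm : p = 2*m+1 := by omega
  have half : ∑ j ∈ Finset.Icc 1 m, (j : ZMod p)⁻¹ * (((2 * j).choose j : ℕ) : ZMod p) = 0 := by
    have step1 : ∀ k ∈ Finset.Icc 1 m, (k : ZMod p)⁻¹ * (((2 * k).choose k : ℕ) : ZMod p)
        = (k : ZMod p)⁻¹ * ((m.choose k : ℕ) : ZMod p) * (-4 : ZMod p)^k := by
      intro k hk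
      simp only [Finset.mem_Icc] at hk
      rw [stepB p hp hp3 k (by omega)]
      ring
    rw [Finset.sum_congr rfl step1, idC p hp (-4) m (by omega)]
    have : (1 + (-4 : ZMod p)) = -3 := by ring
    rw [this]
    exact keyZero p hp hp3
  constructor
  · rw [← half]
    refine Eq.symm (Finset.sum_subset ?_ ?_)
    · apply Finset.Icc_subset_Icc_right
      have := hp.two_le
      omega
    · intro k hk hnk
      simp only [Finset.mem_Icc] at *
      have hkm : m < k := by omega
      have hdvd : p ∣ (2*k).choose k := by
        have := hp.dvd_choose_add (show k < p by omega) (show k < p by omega) (show p ≤ k + k by omega)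
        rwa [show k + k = 2*k from by ring] at this
      have : (((2*k).choose k : ℕ) : ZMod p) = 0 := (ZMod.natCast_eq_zero_iff _ _).mpr hdvd
      rw [this, mul_zero]
  · exact half
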